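/- arXiv:1902.11234 — 2 statements merged into one kernel-verified Lean document; each statement's English description precedes it below -/
import Mathlib

section
/- For every real β > 1 and every point t = (t_1, t_2, ...) of the infinite-dimensional torus 𝕋^ω, the sum of the absolutely convergent series ∑_{n=1}^∞ t^{α(n)}/n^β is nonzero; in fact its modulus is at least ∏_{j=1}^∞ (1 + p_j^{-β})^{-1} > 0. -/
open MeasureTheory Filter Finset

noncomputable section

instance : MeasurableSpace Circle := borel Circle
instance : BorelSpace Circle := ⟨rfl⟩

/-- The infinite-dimensional torus `𝕋^ω`, a countable product of unit circles. -/
abbrev Torus : Type := ℕ → Circle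

/-- `pprime j` is the `j`-th prime (`0`-indexed, so `pprime 0 = 2`). -/
def pprime (j : ℕ) : ℕ := Nat.nth Nat.Prime j

/-- `expOf n j` is `α_j(n)`, the exponent of the `j`-th prime in the factorization of `n`. -/
def expOf (n j : ℕ) : ℕ := n.factorization (pprime j)

/-- `tpow t n = t^{α(n)} = ∏_j t_j^{α_j(n)}`, a finite product. -/
def tpow (t : Torus) (n : ℕ) : ℂ := ∏ᶠ j, ((t j : ℂ) ^ expOf n j)

lemma pprime_injective : Function.Injective pprime :=
  Nat.nth_injective Nat.infinite_setOf_prime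

lemma pprime_prime (j : ℕ) : Nat.Prime (pprime j) := Nat.prime_nth_prime j

/-- The bijection `ℕ ≃ Nat.Primes` given by `pprime`. -/
def primeEquiv : ℕ ≃ Nat.Primes :=
  Equiv.ofBijective (fun j => ⟨pprime j, pprime_prime j⟩)
    ⟨fun a b h => pprime_injective (congrArg Subtype.val h),
     fun p => ⟨Nat.count Nat.Prime p, Subtype.ext (Nat.nth_count p.2)⟩⟩

lemma mulSupport_tpow_finite (t : Torus) (n : ℕ) :
    (Function.mulSupport fun j => ((t j : ℂ) ^ expOf n j)).Finite := by
  apply Set.Finite.subset (Set.Finite.preimage pprime_injective.injOn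
    n.factorization.support.finite_toSet)
  intro j hj
  simp only [Set.mem_preimage, Finset.mem_coe, Finsupp.mem_support_iff]
  intro h
  apply hj
  show (t j : ℂ) ^ expOf n j = 1
  rw [expOf, h, pow_zero]

lemma norm_tpow (t : Torus) (n : ℕ) : ‖tpow t n‖ = 1 := by
  rw [tpow, finprod_eq_prod _ (mulSupport_tpow_finite t n), norm_prod]
  apply Finset.prod_eq_one
  intro j _
  rw [norm_pow]
  simp [Circle.norm_coe]

lemma tpow_one (t : Torus) : tpow t 1 = 1 := by
  simp [tpow, expOf, Nat.factorization_one]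

lemma tpow_mul (t : Torus) {m n : ℕ} (hm : m ≠ 0) (hn : n ≠ 0) :
    tpow t (m * n) = tpow t m * tpow t n := by
  rw [tpow, tpow, tpow,
    ← finprod_mul_distrib (mulSupport_tpow_finite t m) (mulSupport_tpow_finite t n)]
  apply finprod_congr
  intro j
  rw [← pow_add]
  congr 1
  rw [expOf, expOf, expOf, Nat.factorization_mul hm hn, Finsupp.add_apply]

/-- The completely multiplicative function `n ↦ t^{α(n)} n^{-β}` (with value `0` at `0`). -/
def zfun (t : Torus) (β : ℝ) (hβ : β ≠ 0) : ℕ →*₀ ℂ where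
  toFun n := tpow t n * (((n : ℝ) ^ (-β) : ℝ) : ℂ)
  map_zero' := by
    simp [Real.zero_rpow (neg_ne_zero.mpr hβ)]
  map_one' := by
    simp [tpow_one]
  map_mul' m n := by
    rcases eq_or_ne m 0 with rfl | hm
    · simp [Real.zero_rpow (neg_ne_zero.mpr hβ)]
    rcases eq_or_ne n 0 with rfl | hn
    · simp [Real.zero_rpow (neg_ne_zero.mpr hβ)]
    show tpow t (m * n) * _ = (tpow t m * _) * (tpow t n * _)
    have h : ((m * n : ℕ) : ℝ) = (m : ℝ) * (n : ℝ) := by push_cast; ring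
    rw [h, Real.mul_rpow (by positivity) (by positivity), tpow_mul t hm hn]
    push_cast
    ring

lemma zfun_apply (t : Torus) (β : ℝ) (hβ : β ≠ 0) (n : ℕ) :
    zfun t β hβ n = tpow t n * (((n : ℝ) ^ (-β) : ℝ) : ℂ) := rfl

lemma norm_zfun (t : Torus) (β : ℝ) (hβ : β ≠ 0) (n : ℕ) :
    ‖zfun t β hβ n‖ = (n : ℝ) ^ (-β) := by
  rw [zfun_apply, norm_mul, norm_tpow, one_mul, Complex.norm_real,
    Real.norm_eq_abs, abs_of_nonneg (Real.rpow_nonneg n.cast_nonneg _)]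

/-- For every real `β > 1` and every `t ∈ 𝕋^ω`, the (absolutely convergent) series
`∑_{n=1}^∞ t^{α(n)}/n^β` has nonzero sum; in fact its modulus is at least
`∏_{j=1}^∞ (1 + p_j^{-β})⁻¹ > 0`. -/
theorem zeta_series_on_torus_ne_zero (β : ℝ) (hβ : 1 < β) (t : Torus) :
    Summable (fun n : ℕ => ‖tpow t (n + 1) / (Complex.ofReal (((n : ℝ) + 1) ^ β))‖) ∧
    (∑' n : ℕ, tpow t (n + 1) / (Complex.ofReal (((n : ℝ) + 1) ^ β))) ≠ 0 ∧
    Multipliable (fun j : ℕ => (1 + (pprime j : ℝ) ^ (-β))⁻¹) ∧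
    0 < ∏' j : ℕ, (1 + (pprime j : ℝ) ^ (-β))⁻¹ ∧
    (∏' j : ℕ, (1 + (pprime j : ℝ) ^ (-β))⁻¹)
      ≤ ‖∑' n : ℕ, tpow t (n + 1) / (Complex.ofReal (((n : ℝ) + 1) ^ β))‖ := by
  have hβ0 : β ≠ 0 := by linarith
  set F : ℕ →*₀ ℂ := zfun t β hβ0 with hFdef
  have hnormF : ∀ n : ℕ, ‖F n‖ = (n : ℝ) ^ (-β) := norm_zfun t β hβ0
  have hsumnorm : Summable (fun n : ℕ => ‖F n‖) := by
    have h : Summable (fun n : ℕ => (n : ℝ) ^ (-β)) :=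
      Real.summable_nat_rpow.mpr (by linarith)
    exact h.congr fun n => (hnormF n).symm
  -- the series in the statement is `fun n => F (n+1)`
  have hSeq : (fun n : ℕ => tpow t (n + 1) / (Complex.ofReal (((n : ℝ) + 1) ^ β)))
      = fun n : ℕ => F (n + 1) := by
    funext n
    rw [hFdef, zfun_apply, div_eq_mul_inv]
    congr 1
    rw [← Complex.ofReal_inv]
    congr 1
    rw [Nat.cast_add, Nat.cast_one, Real.rpow_neg (by positivity)]
  have hsumF : Summable (fun n : ℕ => (F n : ℂ)) := hsumnorm.of_norm
  have hshift : (∑' n : ℕ, F (n + 1)) = ∑' n : ℕ, F n := by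
    rw [Summable.tsum_eq_zero_add hsumF, map_zero, zero_add]
  -- Euler product
  have hasP : HasProd (fun p : Nat.Primes => (1 - F p)⁻¹) (∑' n : ℕ, F n) :=
    EulerProduct.eulerProduct_completely_multiplicative_hasProd hsumnorm
  have hmulP : Multipliable (fun p : Nat.Primes => (1 - F p)⁻¹) := ⟨_, hasP⟩
  have hnormsum : ‖∑' n : ℕ, F n‖ = ∏' j : ℕ, ‖(1 - F (pprime j))⁻¹‖ := by
    rw [← hasP.tprod_eq, hmulP.norm_tprod,
      ← Equiv.tprod_eq primeEquiv (fun p : Nat.Primes => ‖(1 - F (p : ℕ))⁻¹‖)]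
    rfl
  -- real side
  have hp_pos : ∀ j : ℕ, (0 : ℝ) < (pprime j : ℝ) :=
    fun j => by exact_mod_cast (pprime_prime j).pos
  have hx_pos : ∀ j : ℕ, 0 < (pprime j : ℝ) ^ (-β) :=
    fun j => Real.rpow_pos_of_pos (hp_pos j) _
  have hx_lt_one : ∀ j : ℕ, (pprime j : ℝ) ^ (-β) < 1 := fun j =>
    Real.rpow_lt_one_of_one_lt_of_neg (by exact_mod_cast (pprime_prime j).one_lt)
      (by linarith)
  have hxsum : Summable (fun j : ℕ => (pprime j : ℝ) ^ (-β)) :=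
    (Real.summable_nat_rpow.mpr (by linarith : -β < -1)).comp_injective pprime_injective
  have hlogsum : Summable (fun j : ℕ => Real.log ((1 + (pprime j : ℝ) ^ (-β))⁻¹)) := by
    have h1 : Summable (fun j : ℕ => Real.log (1 + (pprime j : ℝ) ^ (-β))) := by
      refine Summable.of_nonneg_of_le
        (fun j => Real.log_nonneg (by linarith [hx_pos j])) (fun j => ?_) hxsum
      have := Real.log_le_sub_one_of_pos
        (show (0:ℝ) < 1 + (pprime j : ℝ) ^ (-β) by linarith [hx_pos j])
      linarith
    exact h1.neg.congr fun j => by rw [Real.log_inv]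
  have hmulg : Multipliable (fun j : ℕ => (1 + (pprime j : ℝ) ^ (-β))⁻¹) :=
    Real.multipliable_of_summable_log
      (fun j => by have := hx_pos j; positivity) hlogsum
  have hgpos : 0 < ∏' j : ℕ, (1 + (pprime j : ℝ) ^ (-β))⁻¹ := by
    have h := Real.rexp_tsum_eq_tprod (f := fun j => (1 + (pprime j : ℝ) ^ (-β))⁻¹)
      (fun j => by have := hx_pos j; positivity) hlogsum
    rw [← h]
    exact Real.exp_pos _
  -- pointwise comparison
  have hle : ∀ j : ℕ, (1 + (pprime j : ℝ) ^ (-β))⁻¹ ≤ ‖(1 - F (pprime j))⁻¹‖ := by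
    intro j
    rw [norm_inv]
    have hub : ‖(1 : ℂ) - F (pprime j)‖ ≤ 1 + (pprime j : ℝ) ^ (-β) := by
      calc ‖(1 : ℂ) - F (pprime j)‖ ≤ ‖(1 : ℂ)‖ + ‖F (pprime j)‖ := norm_sub_le _ _
        _ = 1 + (pprime j : ℝ) ^ (-β) := by rw [norm_one, hnormF]
    have hlb : 0 < ‖(1 : ℂ) - F (pprime j)‖ := by
      have h2 := norm_sub_norm_le (1 : ℂ) (F (pprime j))
      rw [norm_one, hnormF] at h2
      linarith [hx_lt_one j]
    exact inv_anti₀ hlb hub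
  have hmulh : Multipliable (fun j : ℕ => ‖(1 - F (pprime j))⁻¹‖) :=
    (primeEquiv.multipliable_iff).mpr hmulP.norm
  have key : (∏' j : ℕ, (1 + (pprime j : ℝ) ^ (-β))⁻¹)
      ≤ ∏' j : ℕ, ‖(1 - F (pprime j))⁻¹‖ :=
    le_of_tendsto_of_tendsto' hmulg.hasProd hmulh.hasProd fun s =>
      Finset.prod_le_prod (fun j _ => by have := hx_pos j; positivity) fun j _ => hle j
  have hfinal : (∏' j : ℕ, (1 + (pprime j : ℝ) ^ (-β))⁻¹)
      ≤ ‖∑' n : ℕ, tpow t (n + 1) / (Complex.ofReal (((n : ℝ) + 1) ^ β))‖ := by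
    rw [show (∑' n : ℕ, tpow t (n + 1) / (Complex.ofReal (((n : ℝ) + 1) ^ β)))
        = ∑' n : ℕ, F n by rw [← hshift]; exact congrArg tsum hSeq]
    rw [hnormsum]
    exact key
  refine ⟨?_, ?_, hmulg, hgpos, hfinal⟩
  · have h : (fun n : ℕ => ‖tpow t (n + 1) / (Complex.ofReal (((n : ℝ) + 1) ^ β))‖)
        = fun n : ℕ => ‖F (n + 1)‖ := by
      funext n; rw [congrFun hSeq n]
    rw [h]
    exact hsumnorm.comp_injective Nat.succ_injective
  · intro h0
    rw [h0, norm_zero] at hfinal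
    exact absurd hfinal (not_le.mpr hgpos)

end
end

section
/- For every real β > 1 and every real x ≥ 1, ∑_{a ≤ x} μ(a) = ∫_{𝕋^ω} ∑_{a ≤ x} (∑_{n=1}^∞ (an)^{−β} t^{α(an)})^{-1} dt, where the outer sums run over positive integers a ≤ x. -/
open MeasureTheory Filter Finset

noncomputable section

lemma mulSupport_tpow (t : Torus) (n : ℕ) :
    (Function.mulSupport fun j => ((t j : ℂ) ^ expOf n j)) ⊆ ↑(Finset.range (n+1)) := by
  intro j hj
  simp only [Finset.coe_range, Set.mem_Iio]
  by_contra h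
  push_neg at h
  apply hj
  have he : expOf n j = 0 := by
    unfold expOf
    rcases Nat.eq_zero_or_pos n with rfl | hn
    · simp
    · apply Nat.factorization_eq_zero_of_not_dvd
      intro hdvd
      have h1 : pprime j ≤ n := Nat.le_of_dvd hn hdvd
      have h2 : j ≤ pprime j := (Nat.nth_strictMono Nat.infinite_setOf_prime).le_apply
      omega
  simp only []
  rw [he, pow_zero]

lemma tpow_eq_prod (t : Torus) (n : ℕ) :
    tpow t n = ∏ j ∈ Finset.range (n+1), ((t j : ℂ) ^ expOf n j) :=
  finprod_eq_prod_of_mulSupport_subset _ (mulSupport_tpow t n)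

lemma tpow_ne_zero (t : Torus) (n : ℕ) : tpow t n ≠ 0 := by
  intro h
  have := norm_tpow t n
  rw [h, norm_zero] at this
  norm_num at this

lemma tpow_mul_left (g t : Torus) (n : ℕ) :
    tpow (g * t) n = tpow g n * tpow t n := by
  rw [tpow_eq_prod, tpow_eq_prod, tpow_eq_prod, ← Finset.prod_mul_distrib]
  refine Finset.prod_congr rfl fun j _ => ?_
  rw [← mul_pow]
  norm_cast

lemma continuous_tpow (n : ℕ) : Continuous fun t : Torus => tpow t n := by
  simp_rw [tpow_eq_prod]
  refine continuous_finset_prod _ fun j _ => ?_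
  exact (continuous_subtype_val.comp (continuous_apply j)).pow _

lemma tpow_single (z : Circle) (j n : ℕ) :
    tpow (fun i => if i = j then z else 1) n = (z : ℂ) ^ expOf n j := by
  unfold tpow
  rw [finprod_eq_single _ j]
  · simp
  · intro i hi
    simp [hi]

lemma integral_tpow_char (ν : Measure Torus) [ν.IsHaarMeasure] [IsProbabilityMeasure ν]
    {a m : ℕ} (ha : a ≠ 0) (hm : m ≠ 0) :
    ∫ t : Torus, (tpow t a)⁻¹ * tpow t m ∂ν = if m = a then 1 else 0 := by
  split_ifs with h
  · subst h
    simp only [inv_mul_cancel₀ (tpow_ne_zero _ _)]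
    simp
  · -- find a coordinate where exponents differ
    obtain ⟨p, hp⟩ : ∃ p, a.factorization p ≠ m.factorization p := by
      by_contra hc
      push_neg at hc
      exact h (Nat.factorization_inj (by simp [hm]) (by simp [ha])
        (Finsupp.ext fun p => (hc p).symm))
    have hp' : p.Prime := by
      by_contra hnp
      simp [Nat.factorization_eq_zero_of_not_prime _ hnp] at hp
    set j := Nat.count Nat.Prime p with hj
    have hpj : pprime j = p := Nat.nth_count hp'
    have hne : expOf m j ≠ expOf a j := by
      unfold expOf
      rw [hpj]
      exact fun hh => hp (hh.symm)
    set d : ℤ := (expOf m j : ℤ) - (expOf a j : ℤ) with hdd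
    have hd : d ≠ 0 := by
      simp only [hdd, sub_ne_zero, ne_eq, Nat.cast_inj]
      exact_mod_cast hne
    set z : Circle := Circle.exp (Real.pi / d) with hz
    set g : Torus := fun i => if i = j then z else 1 with hg
    have hzd : (z : ℂ) ^ d = -1 := by
      rw [hz, Circle.coe_exp, ← Complex.exp_int_mul]
      have : (d : ℂ) * (↑(Real.pi / (d : ℝ)) * Complex.I) = Real.pi * Complex.I := by
        have hdC : (d : ℂ) ≠ 0 := Int.cast_ne_zero.mpr hd
        push_cast
        field_simp
      rw [this, Complex.exp_pi_mul_I]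
    have key : ∀ t : Torus, (tpow (g * t) a)⁻¹ * tpow (g * t) m
        = ((z : ℂ) ^ d) * ((tpow t a)⁻¹ * tpow t m) := by
      intro t
      rw [tpow_mul_left, tpow_mul_left, hg, tpow_single, tpow_single]
      have hz0 : (z : ℂ) ≠ 0 := Circle.coe_ne_zero z
      rw [hdd, zpow_sub₀ hz0]
      rw [zpow_natCast, zpow_natCast]
      have h1 : (z : ℂ) ^ expOf a j ≠ 0 := pow_ne_zero _ (Circle.coe_ne_zero z)
      have h2 : tpow t a ≠ 0 := tpow_ne_zero t a
      field_simp
    have hinv := MeasureTheory.integral_mul_left_eq_self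
      (μ := ν) (fun t => (tpow t a)⁻¹ * tpow t m) g
    simp only [key] at hinv
    rw [integral_const_mul, hzd] at hinv
    have : (2 : ℂ) * ∫ t : Torus, (tpow t a)⁻¹ * tpow t m ∂ν = 0 := by
      linear_combination -hinv
    simpa using this

open scoped LSeries.notation ArithmeticFunction.Moebius

/-- The coefficient function `f_t`. -/
def ftpow (t : Torus) (n : ℕ) : ℂ := if n = 0 then 0 else tpow t n

lemma ftpow_one (t : Torus) : ftpow t 1 = 1 := by
  simp only [ftpow, one_ne_zero, if_false]
  rw [tpow_eq_prod]
  refine Finset.prod_eq_one fun j _ => ?_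
  simp [expOf]

lemma ftpow_mul (t : Torus) {m n : ℕ} (hm : m ≠ 0) (hn : n ≠ 0) :
    ftpow t (m * n) = ftpow t m * ftpow t n := by
  simp only [ftpow, hm, hn, mul_ne_zero hm hn, if_false]
  exact tpow_mul t hm hn

lemma conv_distrib {f : ℕ → ℂ} (hf : ∀ {m n : ℕ}, m ≠ 0 → n ≠ 0 → f (m * n) = f m * f n)
    (u v : ℕ → ℂ) : (f * u) ⍟ (f * v) = f * (u ⍟ v) := by
  ext n
  simp only [LSeries.convolution_def, Pi.mul_apply, Finset.mul_sum]
  refine Finset.sum_congr rfl fun p hp => ?_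
  obtain ⟨h1, h2⟩ := Nat.ne_zero_of_mem_divisorsAntidiagonal hp
  rw [← (Nat.mem_divisorsAntidiagonal.mp hp).1, hf h1 h2]
  ring

lemma one_conv_moebius : (1 : ℕ → ℂ) ⍟ ↗μ = LSeries.delta := by
  rw [LSeries.one_convolution_eq_zeta_convolution, ← ArithmeticFunction.one_eq_delta]
  simp_rw [← ArithmeticFunction.natCoe_apply, ← ArithmeticFunction.intCoe_apply,
    ArithmeticFunction.coe_mul, ArithmeticFunction.coe_zeta_mul_coe_moebius]

lemma conv_moebius {f : ℕ → ℂ} (h1 : f 1 = 1)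
    (hf : ∀ {m n : ℕ}, m ≠ 0 → n ≠ 0 → f (m * n) = f m * f n) :
    f ⍟ (f * ↗μ) = LSeries.delta := by
  nth_rewrite 1 [show f = f * (1 : ℕ → ℂ) from (mul_one f).symm]
  rw [conv_distrib hf (1 : ℕ → ℂ) ↗μ, one_conv_moebius, LSeries.mul_delta h1]

lemma norm_ftpow_le (t : Torus) (n : ℕ) (hn : n ≠ 0) : ‖ftpow t n‖ ≤ 1 := by
  simp only [ftpow, hn, if_false]
  rw [norm_tpow]

lemma summable_ftpow (t : Torus) {β : ℝ} (hβ : 1 < β) :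
    LSeriesSummable (ftpow t) β :=
  LSeriesSummable_of_bounded_of_one_lt_real (fun n hn => norm_ftpow_le t n hn) hβ

lemma summable_mu_ftpow (t : Torus) {β : ℝ} (hβ : 1 < β) :
    LSeriesSummable (ftpow t * ↗μ) β := by
  refine LSeriesSummable_of_bounded_of_one_lt_real (m := 1) (fun n hn => ?_) hβ
  rw [Pi.mul_apply, norm_mul]
  calc ‖ftpow t n‖ * ‖((μ n : ℤ) : ℂ)‖
      ≤ 1 * 1 := by
        refine mul_le_mul (norm_ftpow_le t n hn) ?_ (by positivity) zero_le_one
        rw [Complex.norm_intCast]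
        exact_mod_cast ArithmeticFunction.abs_moebius_le_one
    _ = 1 := one_mul 1

lemma LSeries_ftpow_mul (t : Torus) {β : ℝ} (hβ : 1 < β) :
    LSeries (ftpow t) β * LSeries (ftpow t * ↗μ) β = 1 := by
  rw [← LSeries_convolution' (summable_ftpow t hβ) (summable_mu_ftpow t hβ),
    conv_moebius (ftpow_one t) (fun hm hn => ftpow_mul t hm hn), LSeries_delta, Pi.one_apply]

lemma term_ftpow (t : Torus) {β : ℝ} (hβ : 1 < β) (m : ℕ) :
    LSeries.term (ftpow t) β m = Complex.ofReal ((m : ℝ) ^ (-β)) * tpow t m := by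
  rcases eq_or_ne m 0 with rfl | hm
  · rw [LSeries.term_zero]
    rw [Nat.cast_zero, Real.zero_rpow (by intro h; rw [neg_eq_zero] at h; linarith : -β ≠ 0)]
    simp
  · rw [LSeries.term_of_ne_zero hm]
    have hc : ((((m : ℝ)) ^ (-β) : ℝ) : ℂ) = ((m : ℝ) : ℂ) ^ ((-β : ℝ) : ℂ) :=
      Complex.ofReal_cpow (Nat.cast_nonneg m) (-β)
    rw [hc]
    push_cast
    rw [Complex.cpow_neg]
    simp only [ftpow, hm, if_false]
    rw [div_eq_mul_inv, mul_comm]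

lemma term_mu_ftpow (t : Torus) {β : ℝ} (hβ : 1 < β) (m : ℕ) :
    LSeries.term (ftpow t * ↗μ) β m
      = (μ m : ℂ) * Complex.ofReal ((m : ℝ) ^ (-β)) * tpow t m := by
  rcases eq_or_ne m 0 with rfl | hm
  · simp [LSeries.term_zero]
  · have hX : ((m : ℕ) : ℂ) ^ ((β : ℝ) : ℂ) ≠ 0 := by
      rw [Ne, Complex.cpow_eq_zero_iff]
      exact fun hh => (Nat.cast_ne_zero.mpr hm) hh.1
    have h0 := term_ftpow t hβ m
    rw [LSeries.term_of_ne_zero hm, div_eq_iff hX] at h0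
    rw [LSeries.term_of_ne_zero hm, Pi.mul_apply, h0]
    field_simp

/-- `W β t = ∑ μ(n) n^{-β} t^{α(n)}`, the inverse of the zeta-like series. -/
def Wfun (β : ℝ) (t : Torus) : ℂ :=
  ∑' n : ℕ, (μ (n+1) : ℂ) * Complex.ofReal (((n+1 : ℕ) : ℝ) ^ (-β)) * tpow t (n+1)

lemma Wfun_eq (t : Torus) {β : ℝ} (hβ : 1 < β) :
    Wfun β t = LSeries (ftpow t * ↗μ) β := by
  rw [LSeries, Summable.tsum_eq_zero_add (summable_mu_ftpow t hβ), LSeries.term_zero, zero_add]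
  exact tsum_congr fun n => by rw [term_mu_ftpow t hβ (n+1)]

lemma stmt_eq (t : Torus) {β : ℝ} (hβ : 1 < β) {a : ℕ} (ha : a ≠ 0) :
    (∑' n : ℕ, Complex.ofReal (((a * (n + 1) : ℕ) : ℝ) ^ (-β)) * tpow t (a * (n + 1)))
      = LSeries.term (ftpow t) β a * LSeries (ftpow t) β := by
  have hmul : ∀ n : ℕ, LSeries.term (ftpow t) β (a * (n+1))
      = LSeries.term (ftpow t) β a * LSeries.term (ftpow t) β (n+1) := by
    intro n
    have hn : (n+1 : ℕ) ≠ 0 := Nat.succ_ne_zero n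
    rw [LSeries.term_of_ne_zero (mul_ne_zero ha hn), LSeries.term_of_ne_zero ha,
      LSeries.term_of_ne_zero hn, ftpow_mul t ha hn, Nat.cast_mul,
      Complex.natCast_mul_natCast_cpow, div_mul_div_comm]
  calc (∑' n : ℕ, Complex.ofReal (((a * (n + 1) : ℕ) : ℝ) ^ (-β)) * tpow t (a * (n + 1)))
      = ∑' n : ℕ, LSeries.term (ftpow t) β (a * (n+1)) :=
        tsum_congr fun n => (term_ftpow t hβ _).symm
    _ = ∑' n : ℕ, LSeries.term (ftpow t) β a * LSeries.term (ftpow t) β (n+1) :=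
        tsum_congr hmul
    _ = LSeries.term (ftpow t) β a * ∑' n : ℕ, LSeries.term (ftpow t) β (n+1) :=
        tsum_mul_left
    _ = LSeries.term (ftpow t) β a * LSeries (ftpow t) β := by
        rw [LSeries, Summable.tsum_eq_zero_add (summable_ftpow t hβ), LSeries.term_zero, zero_add]

lemma stmt_inv (t : Torus) {β : ℝ} (hβ : 1 < β) {a : ℕ} (ha : a ≠ 0) :
    (∑' n : ℕ, Complex.ofReal (((a * (n + 1) : ℕ) : ℝ) ^ (-β)) * tpow t (a * (n + 1)))⁻¹
      = ((a : ℕ) : ℂ) ^ ((β : ℝ) : ℂ) * (tpow t a)⁻¹ * Wfun β t := by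
  rw [stmt_eq t hβ ha, mul_inv]
  have h1 : (LSeries (ftpow t) β)⁻¹ = LSeries (ftpow t * ↗μ) β :=
    inv_eq_of_mul_eq_one_right (LSeries_ftpow_mul t hβ)
  rw [h1, ← Wfun_eq t hβ]
  congr 1
  rw [LSeries.term_of_ne_zero ha]
  simp only [ftpow, ha, if_false]
  rw [inv_div, div_eq_mul_inv]

lemma summable_aux {β : ℝ} (hβ : 1 < β) :
    Summable (fun n : ℕ => ((n+1 : ℕ) : ℝ) ^ (-β)) := by
  have h1 : Summable (fun n : ℕ => (n : ℝ) ^ (-β)) :=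
    Real.summable_nat_rpow.mpr (by linarith)
  have h2 := (summable_nat_add_iff 1).mpr h1
  exact_mod_cast h2

lemma norm_Wterm (β : ℝ) (t : Torus) (n : ℕ) :
    ‖(μ (n+1) : ℂ) * Complex.ofReal (((n+1 : ℕ) : ℝ) ^ (-β)) * tpow t (n+1)‖
      ≤ ((n+1 : ℕ) : ℝ) ^ (-β) := by
  rw [norm_mul, norm_mul, norm_tpow, mul_one, Complex.norm_real,
    Real.norm_of_nonneg (Real.rpow_nonneg (Nat.cast_nonneg _) _)]
  have hμ : ‖((μ (n+1) : ℤ) : ℂ)‖ ≤ 1 := by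
    rw [Complex.norm_intCast]
    exact_mod_cast ArithmeticFunction.abs_moebius_le_one
  calc ‖((μ (n+1) : ℤ) : ℂ)‖ * ((n+1 : ℕ) : ℝ) ^ (-β)
      ≤ 1 * ((n+1 : ℕ) : ℝ) ^ (-β) := by
        exact mul_le_mul_of_nonneg_right hμ (Real.rpow_nonneg (Nat.cast_nonneg _) _)
    _ = ((n+1 : ℕ) : ℝ) ^ (-β) := one_mul _

lemma continuous_Wfun {β : ℝ} (hβ : 1 < β) : Continuous (Wfun β) := by
  refine continuous_tsum (fun n => ?_) (summable_aux hβ) (fun n t => norm_Wterm β t n)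
  exact continuous_const.mul (continuous_tpow (n+1))

lemma norm_Wfun_le {β : ℝ} (hβ : 1 < β) (t : Torus) :
    ‖Wfun β t‖ ≤ ∑' n : ℕ, ((n+1 : ℕ) : ℝ) ^ (-β) :=
  tsum_of_norm_bounded (summable_aux hβ).hasSum (fun n => norm_Wterm β t n)

lemma norm_hterm (A : ℂ) (β : ℝ) (a n : ℕ) (t : Torus) :
    ‖(A * (μ (n+1) : ℂ) * Complex.ofReal (((n+1 : ℕ) : ℝ) ^ (-β)))
        * ((tpow t a)⁻¹ * tpow t (n+1))‖ ≤ ‖A‖ * ((n+1 : ℕ) : ℝ) ^ (-β) := by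
  have h1 : ‖(tpow t a)⁻¹ * tpow t (n+1)‖ = 1 := by
    rw [norm_mul, norm_inv, norm_tpow, norm_tpow, inv_one, one_mul]
  rw [norm_mul, h1, mul_one, norm_mul, norm_mul, Complex.norm_real,
    Real.norm_of_nonneg (Real.rpow_nonneg (Nat.cast_nonneg _) _)]
  have hμ : ‖((μ (n+1) : ℤ) : ℂ)‖ ≤ 1 := by
    rw [Complex.norm_intCast]
    exact_mod_cast ArithmeticFunction.abs_moebius_le_one
  have h0 : (0:ℝ) ≤ ((n+1 : ℕ) : ℝ) ^ (-β) := Real.rpow_nonneg (Nat.cast_nonneg _) _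
  calc ‖A‖ * ‖((μ (n+1) : ℤ) : ℂ)‖ * (((n+1 : ℕ) : ℝ) ^ (-β))
      ≤ ‖A‖ * 1 * (((n+1 : ℕ) : ℝ) ^ (-β)) := by
        refine mul_le_mul_of_nonneg_right ?_ h0
        exact mul_le_mul_of_nonneg_left hμ (norm_nonneg A)
    _ = ‖A‖ * (((n+1 : ℕ) : ℝ) ^ (-β)) := by ring

lemma integral_inv_eq (ν : Measure Torus) [ν.IsHaarMeasure] [IsProbabilityMeasure ν]
    {β : ℝ} (hβ : 1 < β) {a : ℕ} (ha : a ≠ 0) :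
    ∫ t : Torus,
      (∑' n : ℕ, Complex.ofReal (((a * (n + 1) : ℕ) : ℝ) ^ (-β)) * tpow t (a * (n + 1)))⁻¹ ∂ν
      = (μ a : ℂ) := by
  set A : ℂ := ((a : ℕ) : ℂ) ^ ((β : ℝ) : ℂ) with hA
  set h : ℕ → Torus → ℂ := fun n t =>
    (A * (μ (n+1) : ℂ) * Complex.ofReal (((n+1 : ℕ) : ℝ) ^ (-β)))
      * ((tpow t a)⁻¹ * tpow t (n+1)) with hh
  have heq : ∀ t : Torus,
      (∑' n : ℕ, Complex.ofReal (((a * (n + 1) : ℕ) : ℝ) ^ (-β)) * tpow t (a * (n + 1)))⁻¹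
        = ∑' n, h n t := by
    intro t
    have htl : ∑' n : ℕ, (A * (tpow t a)⁻¹) *
        ((μ (n+1) : ℂ) * Complex.ofReal (((n+1 : ℕ) : ℝ) ^ (-β)) * tpow t (n+1))
        = (A * (tpow t a)⁻¹) * ∑' n : ℕ,
          ((μ (n+1) : ℂ) * Complex.ofReal (((n+1 : ℕ) : ℝ) ^ (-β)) * tpow t (n+1)) :=
      tsum_mul_left
    rw [stmt_inv t hβ ha, Wfun, ← htl]
    refine tsum_congr fun n => ?_
    simp only [hh]
    ring
  have hfun : (fun t : Torus =>
      (∑' n : ℕ, Complex.ofReal (((a * (n + 1) : ℕ) : ℝ) ^ (-β)) * tpow t (a * (n + 1)))⁻¹)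
      = fun t => ∑' n, h n t := funext heq
  rw [hfun]
  have hmeas : ∀ n : ℕ, AEStronglyMeasurable (h n) ν := by
    intro n
    refine Continuous.aestronglyMeasurable ?_
    exact continuous_const.mul
      (((continuous_tpow a).inv₀ (fun t => tpow_ne_zero t a)).mul (continuous_tpow (n+1)))
  have hfin : ∑' n : ℕ, ∫⁻ t : Torus, ‖h n t‖₊ ∂ν ≠ ⊤ := by
    have hb : ∀ n : ℕ, ∫⁻ t : Torus, ‖h n t‖₊ ∂ν
        ≤ ENNReal.ofReal (‖A‖ * ((n+1 : ℕ) : ℝ) ^ (-β)) := by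
      intro n
      calc ∫⁻ t : Torus, ‖h n t‖₊ ∂ν
          ≤ ∫⁻ _t : Torus, ENNReal.ofReal (‖A‖ * ((n+1 : ℕ) : ℝ) ^ (-β)) ∂ν := by
            refine lintegral_mono fun t => ?_
            rw [← ENNReal.ofReal_coe_nnreal, coe_nnnorm]
            exact ENNReal.ofReal_le_ofReal (norm_hterm A β a n t)
        _ = ENNReal.ofReal (‖A‖ * ((n+1 : ℕ) : ℝ) ^ (-β)) := by
            rw [lintegral_const, measure_univ, mul_one]
    refine ne_top_of_le_ne_top ?_ (ENNReal.tsum_le_tsum hb)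
    rw [← ENNReal.ofReal_tsum_of_nonneg
      (fun n => mul_nonneg (norm_nonneg A) (Real.rpow_nonneg (Nat.cast_nonneg _) _))
      ((summable_aux hβ).mul_left ‖A‖)]
    exact ENNReal.ofReal_ne_top
  rw [integral_tsum hmeas hfin]
  have hint : ∀ n : ℕ, ∫ t : Torus, h n t ∂ν
      = (A * (μ (n+1) : ℂ) * Complex.ofReal (((n+1 : ℕ) : ℝ) ^ (-β)))
          * (if (n+1 : ℕ) = a then (1:ℂ) else 0) := by
    intro n
    simp only [hh]
    rw [integral_const_mul, integral_tpow_char ν ha (Nat.succ_ne_zero n)]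
  rw [tsum_congr hint, tsum_eq_single (a-1) ?_]
  · have hsucc : (a - 1) + 1 = a := Nat.succ_pred_eq_of_pos (Nat.pos_of_ne_zero ha)
    rw [hsucc, if_pos rfl, mul_one]
    have hA1 : A * Complex.ofReal ((a : ℝ) ^ (-β)) = 1 := by
      rw [Complex.ofReal_cpow (Nat.cast_nonneg a)]
      push_cast
      rw [Complex.cpow_neg]
      refine mul_inv_cancel₀ ?_
      rw [Ne, Complex.cpow_eq_zero_iff]
      exact fun hcon => (Nat.cast_ne_zero.mpr ha : ((a:ℕ):ℂ) ≠ 0) hcon.1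
    calc A * (μ a : ℂ) * Complex.ofReal ((a : ℝ) ^ (-β))
        = (A * Complex.ofReal ((a : ℝ) ^ (-β))) * (μ a : ℂ) := by ring
      _ = (μ a : ℂ) := by rw [hA1, one_mul]
  · intro n hn
    have : (n + 1 : ℕ) ≠ a := by
      intro hcon
      exact hn (by omega)
    rw [if_neg this, mul_zero]


/-- For every real `β > 1` and every real `x ≥ 1`,
`∑_{a ≤ x} μ(a) = ∫_{𝕋^ω} ∑_{a ≤ x} (∑_{n=1}^∞ (an)^{-β} t^{α(an)})⁻¹ dt`,
where the outer sums run over positive integers `a ≤ x` and `dt` is the normalized Haar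
measure on `𝕋^ω`. -/
theorem moebius_partial_sum_integral (β : ℝ) (hβ : 1 < β) (x : ℝ) (hx : 1 ≤ x)
    (ν : Measure Torus) [ν.IsHaarMeasure] [IsProbabilityMeasure ν] :
    ((∑ a ∈ Finset.Icc 1 ⌊x⌋₊, ArithmeticFunction.moebius a : ℤ) : ℂ) =
      ∫ t : Torus, ∑ a ∈ Finset.Icc 1 ⌊x⌋₊,
        (∑' n : ℕ,
          Complex.ofReal (((a * (n + 1) : ℕ) : ℝ) ^ (-β)) * tpow t (a * (n + 1)))⁻¹ ∂ν := by
  have hint : ∀ a ∈ Finset.Icc 1 ⌊x⌋₊, Integrable (fun t : Torus =>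
      (∑' n : ℕ, Complex.ofReal (((a * (n + 1) : ℕ) : ℝ) ^ (-β)) * tpow t (a * (n + 1)))⁻¹) ν := by
    intro a hale
    have ha : a ≠ 0 := by
      rw [Finset.mem_Icc] at hale
      omega
    have heq : (fun t : Torus =>
        (∑' n : ℕ, Complex.ofReal (((a * (n + 1) : ℕ) : ℝ) ^ (-β)) * tpow t (a * (n + 1)))⁻¹)
        = fun t => ((a : ℕ) : ℂ) ^ ((β : ℝ) : ℂ) * (tpow t a)⁻¹ * Wfun β t :=
      funext fun t => stmt_inv t hβ ha
    rw [heq]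
    have hcont : Continuous (fun t : Torus =>
        ((a : ℕ) : ℂ) ^ ((β : ℝ) : ℂ) * (tpow t a)⁻¹ * Wfun β t) :=
      (continuous_const.mul ((continuous_tpow a).inv₀ (fun t => tpow_ne_zero t a))).mul
        (continuous_Wfun hβ)
    refine Integrable.mono'
      (integrable_const (‖((a : ℕ) : ℂ) ^ ((β : ℝ) : ℂ)‖ * ∑' n : ℕ, ((n+1 : ℕ) : ℝ) ^ (-β)))
      hcont.aestronglyMeasurable (ae_of_all _ fun t => ?_)
    rw [norm_mul, norm_mul, norm_inv, norm_tpow, inv_one, mul_one]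
    exact mul_le_mul_of_nonneg_left (norm_Wfun_le hβ t) (norm_nonneg _)
  rw [integral_finset_sum _ hint]
  have hsum : ∀ a ∈ Finset.Icc 1 ⌊x⌋₊, (∫ t : Torus,
      (∑' n : ℕ, Complex.ofReal (((a * (n + 1) : ℕ) : ℝ) ^ (-β)) * tpow t (a * (n + 1)))⁻¹ ∂ν)
      = ((μ a : ℤ) : ℂ) := by
    intro a hale
    have ha : a ≠ 0 := by
      rw [Finset.mem_Icc] at hale
      omega
    exact integral_inv_eq ν hβ ha
  rw [Finset.sum_congr rfl hsum]
  push_cast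
  rfl
end
end
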